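/- Let p > 1, c > 0, γ = min(1/(p-1), β/p) with β > 0, and suppose a nonnegative sequence {y_t} satisfies y_{t+1} ≤ y_t - c·y_t^p + B·t^{-β} for t ≥ N₀, with y_{N₀} ≤ A·N₀^{-γ} for a sufficiently large constant A (depending on c, B, p, β, γ). Then y_t ≤ A·t^{-γ} for all t ≥ N₀ (for N₀ sufficiently large). -/

import Mathlib

open Real Filter

/-- Bernoulli-type inequality: `1 - γ s ≤ (1+s)^{-γ}` for `γ > 0`, `s ≥ 0`. -/
lemma bern_aux {γ s : ℝ} (hγ : 0 < γ) (hs : 0 ≤ s) : 1 - γ * s ≤ (1 + s) ^ (-γ) := by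
  have h1s : (0:ℝ) < 1 + s := by linarith
  rcases le_total γ 1 with h1 | h1
  · rcases le_or_gt (1 - γ * s) 0 with h | h
    · exact h.trans (Real.rpow_nonneg h1s.le _)
    have h2 : (1 + s) ^ γ ≤ 1 + γ * s :=
      rpow_one_add_le_one_add_mul_self (by linarith) hγ.le h1
    have h3 : (0:ℝ) < 1 + γ * s := by nlinarith
    have h4 : (0:ℝ) < (1 + s) ^ γ := Real.rpow_pos_of_pos h1s _
    rw [Real.rpow_neg h1s.le]
    have h5 : (1 + γ * s)⁻¹ ≤ ((1 + s) ^ γ)⁻¹ := inv_anti₀ h4 h2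
    refine le_trans ?_ h5
    rw [inv_eq_one_div, le_div_iff₀ h3]
    nlinarith [sq_nonneg (γ * s)]
  · have hu : (-1:ℝ) ≤ -s / (1 + s) := by
      rw [neg_div, neg_le_neg_iff, div_le_one h1s]; linarith
    have h2 := one_add_mul_self_le_rpow_one_add hu h1
    have h3 : 1 + -s / (1 + s) = (1 + s)⁻¹ := by field_simp; ring
    rw [h3, Real.inv_rpow h1s.le, ← Real.rpow_neg h1s.le] at h2
    refine le_trans ?_ h2
    have h5 : s / (1 + s) ≤ s := by
      rw [div_le_iff₀ h1s]; nlinarith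
    have h6 : γ * (s / (1 + s)) ≤ γ * s := mul_le_mul_of_nonneg_left h5 hγ.le
    have h7 : 1 + γ * (-s / (1 + s)) = 1 - γ * (s / (1 + s)) := by ring
    linarith

/-- Step inequality: `T^{-γ} - γ T^{-(γ+1)} ≤ (T+1)^{-γ}`. -/
lemma step_aux {γ T : ℝ} (hγ : 0 < γ) (hT : 1 ≤ T) :
    T ^ (-γ) - γ * T ^ (-(γ + 1)) ≤ (T + 1) ^ (-γ) := by
  have hT0 : (0:ℝ) < T := by linarith
  have hs : (0:ℝ) ≤ 1 / T := by positivity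
  have key := bern_aux hγ hs
  have hTT : T + 1 = T * (1 + 1 / T) := by field_simp
  rw [hTT, Real.mul_rpow hT0.le (by positivity)]
  have h1 : T ^ (-(γ + 1)) = T ^ (-γ) * (1 / T) := by
    rw [one_div, ← Real.rpow_neg_one T, ← Real.rpow_add hT0]
    congr 1; ring
  rw [h1]
  have hTg : (0:ℝ) ≤ T ^ (-γ) := Real.rpow_nonneg hT0.le _
  calc T ^ (-γ) - γ * (T ^ (-γ) * (1 / T)) = T ^ (-γ) * (1 - γ * (1 / T)) := by ring
    _ ≤ T ^ (-γ) * (1 + 1 / T) ^ (-γ) := mul_le_mul_of_nonneg_left key hTg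

theorem polynomial_comparison (p c B β A : ℝ)
    (hp : 1 < p) (hc : 0 < c) (hB : 0 < B) (hβ : 0 < β) (hA : 0 < A)
    (hAbig : c * A ^ p ≥ B + A * min (1 / (p - 1)) (β / p)) :
    ∃ N₁ : ℕ, ∀ N₀ : ℕ, N₁ ≤ N₀ →
      ∀ y : ℕ → ℝ, (∀ t, 0 ≤ y t) →
      (∀ t : ℕ, N₀ ≤ t → y (t + 1) ≤ y t - c * y t ^ p + B * (t : ℝ) ^ (-β)) →
      y N₀ ≤ A * (N₀ : ℝ) ^ (-(min (1 / (p - 1)) (β / p))) →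
      ∀ t : ℕ, N₀ ≤ t → y t ≤ A * (t : ℝ) ^ (-(min (1 / (p - 1)) (β / p))) := by
  set γ : ℝ := min (1 / (p - 1)) (β / p) with hγdef
  have hp0 : (0:ℝ) < p := by linarith
  have hp1 : (0:ℝ) < p - 1 := by linarith
  have hγpos : 0 < γ := lt_min (by positivity) (by positivity)
  have hγ1 : γ * (p - 1) ≤ 1 := by
    have := min_le_left (1 / (p - 1)) (β / p)
    rw [← hγdef] at this
    rw [← le_div_iff₀ hp1]; exact this
  have hγ2 : γ * p ≤ β := by
    have := min_le_right (1 / (p - 1)) (β / p)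
    rw [← hγdef] at this
    rw [← le_div_iff₀ hp0]; exact this
  set M : ℝ := (c * p) ^ (-(1 / (p - 1))) with hMdef
  have hM : 0 < M := Real.rpow_pos_of_pos (by positivity) _
  set f : ℝ → ℝ := fun x => x - c * x ^ p with hfdef
  have hder : ∀ x : ℝ, HasDerivAt f (1 - c * (p * x ^ (p - 1))) x := by
    intro x
    exact (hasDerivAt_id x).sub
      ((Real.hasDerivAt_rpow_const (Or.inr hp.le)).const_mul c)
  have hmono : MonotoneOn f (Set.Icc 0 M) := by
    apply monotoneOn_of_deriv_nonneg (convex_Icc 0 M)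
    · exact fun x _ => ((hder x).continuousAt).continuousWithinAt
    · intro x _
      exact ((hder x).differentiableAt).differentiableWithinAt
    · intro x hx
      rw [interior_Icc] at hx
      rw [(hder x).deriv]
      have hxM : x ^ (p - 1) ≤ M ^ (p - 1) :=
        Real.rpow_le_rpow hx.1.le hx.2.le (by linarith)
      have hMp : M ^ (p - 1) = (c * p)⁻¹ := by
        rw [hMdef, ← Real.rpow_mul (by positivity)]
        have : -(1 / (p - 1)) * (p - 1) = -1 := by field_simp
        rw [this, Real.rpow_neg_one]
      have : c * (p * x ^ (p - 1)) ≤ c * (p * (c * p)⁻¹) := by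
        have := hMp ▸ hxM
        have h0 : 0 ≤ c * p := by positivity
        nlinarith
      have hcp : c * (p * (c * p)⁻¹) = 1 := by field_simp
      linarith [hcp ▸ this]
  -- choose N₁
  have hten : Tendsto (fun x : ℝ => A * x ^ (-γ)) atTop (nhds (A * 0)) :=
    (tendsto_rpow_neg_atTop hγpos).const_mul A
  rw [mul_zero] at hten
  have hev : ∀ᶠ x : ℝ in atTop, A * x ^ (-γ) < M := hten.eventually_lt_const hM
  obtain ⟨x₀, hx₀⟩ := eventually_atTop.mp hev
  refine ⟨max 1 ⌈x₀⌉₊, ?_⟩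
  intro N₀ hN₀ y hy hrec hinit t ht
  induction t, ht using Nat.le_induction with
  | base => exact hinit
  | succ t ht IH =>
    have hN1 : (1:ℕ) ≤ N₀ := le_trans (le_max_left _ _) hN₀
    have ht1 : 1 ≤ t := le_trans hN1 ht
    have hT1 : (1:ℝ) ≤ (t:ℝ) := by exact_mod_cast ht1
    have hT0 : (0:ℝ) < (t:ℝ) := by linarith
    have htx : x₀ ≤ (t:ℝ) := by
      have h1 : ⌈x₀⌉₊ ≤ t := le_trans (le_trans (le_max_right _ _) hN₀) ht
      calc x₀ ≤ (⌈x₀⌉₊ : ℝ) := Nat.le_ceil x₀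
        _ ≤ (t:ℝ) := by exact_mod_cast h1
    have hbM : A * (t:ℝ) ^ (-γ) ≤ M := (hx₀ _ htx).le
    have hbpos : 0 ≤ A * (t:ℝ) ^ (-γ) := by positivity
    -- monotone step
    have h2 : f (y t) ≤ f (A * (t:ℝ) ^ (-γ)) :=
      hmono ⟨hy t, IH.trans hbM⟩ ⟨hbpos, hbM⟩ IH
    have h1 : y (t + 1) ≤ f (y t) + B * (t:ℝ) ^ (-β) := hrec t ht
    have h3 : B * (t:ℝ) ^ (-β) ≤ B * (t:ℝ) ^ (-(γ * p)) :=
      mul_le_mul_of_nonneg_left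
        (Real.rpow_le_rpow_of_exponent_le hT1 (by linarith)) hB.le
    have h4 : f (A * (t:ℝ) ^ (-γ)) =
        A * (t:ℝ) ^ (-γ) - c * A ^ p * (t:ℝ) ^ (-(γ * p)) := by
      rw [hfdef]
      simp only
      rw [Real.mul_rpow hA.le (Real.rpow_nonneg hT0.le _),
        ← Real.rpow_mul hT0.le]
      ring_nf
    have h6 : (t:ℝ) ^ (-(γ + 1)) ≤ (t:ℝ) ^ (-(γ * p)) :=
      Real.rpow_le_rpow_of_exponent_le hT1 (by nlinarith)
    have h7 := step_aux hγpos hT1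
    have h8 : (0:ℝ) ≤ (t:ℝ) ^ (-(γ * p)) := Real.rpow_nonneg hT0.le _
    have h9 : A * γ * (t:ℝ) ^ (-(γ + 1)) ≤ A * γ * (t:ℝ) ^ (-(γ * p)) :=
      mul_le_mul_of_nonneg_left h6 (by positivity)
    have h10 : (B + A * γ) * (t:ℝ) ^ (-(γ * p)) ≤ c * A ^ p * (t:ℝ) ^ (-(γ * p)) :=
      mul_le_mul_of_nonneg_right hAbig h8
    have hcast : ((t + 1 : ℕ) : ℝ) = (t:ℝ) + 1 := by push_cast; ring
    rw [hcast]
    have h11 : A * ((t:ℝ) ^ (-γ) - γ * (t:ℝ) ^ (-(γ + 1))) ≤ A * ((t:ℝ) + 1) ^ (-γ) :=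
      mul_le_mul_of_nonneg_left h7 hA.le
    calc y (t + 1) ≤ f (A * (t:ℝ) ^ (-γ)) + B * (t:ℝ) ^ (-(γ * p)) := by linarith
      _ = A * (t:ℝ) ^ (-γ) - c * A ^ p * (t:ℝ) ^ (-(γ * p))
          + B * (t:ℝ) ^ (-(γ * p)) := by rw [h4]
      _ ≤ A * (t:ℝ) ^ (-γ) - A * γ * (t:ℝ) ^ (-(γ * p)) := by linarith
      _ ≤ A * (t:ℝ) ^ (-γ) - A * γ * (t:ℝ) ^ (-(γ + 1)) := by linarith
      _ = A * ((t:ℝ) ^ (-γ) - γ * (t:ℝ) ^ (-(γ + 1))) := by ring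
      _ ≤ A * ((t:ℝ) + 1) ^ (-γ) := h11
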